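/- If A belongs to the stabilizer of F in sp(H) (i.e., A(F) ⊆ F), then the trace of the induced map on H/F equals the trace of A^{F'} and equals minus the trace of A restricted to F; consequently τ̂_{F'}(A) = τ(A) + (1/2)·trace(A|_F) is independent of the choice of the isotropic complement F'. -/

import Mathlib

open Module LinearMap Finset


set_option maxHeartbeats 2000000 in
/-- If `A ∈ sp(H)` stabilizes `F` (Lagrangian), then the trace of the
induced map on `H/F` equals the trace of `A^{F'}` and equals minus the trace of `A|_F`;
consequently `τ̂_{F'}(A) = τ(A) + (1/2)·trace(A|_F)`, independent of the isotropic
complement `F'`. -/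
theorem heisenberg_tauhat_on_stabilizer {k H U : Type*} [Field k] [CharZero k]
    [AddCommGroup H] [Module k H] [FiniteDimensional k H]
    [Ring U] [Algebra k U]
    (B : LinearMap.BilinForm k H) (hskew : ∀ x y : H, B x y = - B y x)
    (hnd : B.Nondegenerate)
    (ι : H →ₗ[k] U) (h : U)
    (hcomm : ∀ a b : H, ι a * ι b - ι b * ι a = (B a b) • h)
    (hcentral : ∀ u : U, h * u = u * h) (hunit : IsUnit h)
    (sp : Submodule k (Module.End k H))
    (hsp : ∀ A : Module.End k H, A ∈ sp ↔ ∀ x y : H, B (A x) y + B x (A y) = 0)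
    (hGmem : ∀ a : H,
      (LinearMap.toSpanSingleton k H a).comp ((2 : k) • (B a)) ∈ sp)
    (F F' : Submodule k H) (hcompl : IsCompl F F')
    (hFiso : ∀ a ∈ F, ∀ b ∈ F, B a b = 0)
    (hF'iso : ∀ a ∈ F', ∀ b ∈ F', B a b = 0)
    (hFmax : ∀ x : H, (∀ a ∈ F, B a x = 0) → x ∈ F)
    (p : H →ₗ[k] F') (hp0 : ∀ a ∈ F, p a = 0) (hp1 : ∀ b : F', p (b : H) = b)
    (τ τhat : sp →ₗ[k] U)
    (hτ : ∀ u : H,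
      τ ⟨(LinearMap.toSpanSingleton k H u).comp ((2 : k) • (B u)), hGmem u⟩ * h
        = ι u * ι u)
    (hτhat : ∀ (a : F) (a' : F'),
      τhat ⟨(LinearMap.toSpanSingleton k H ((a : H) + (a' : H))).comp
              ((2 : k) • (B ((a : H) + (a' : H)))), hGmem _⟩ * h
        = ι (a : H) * ι (a : H) + (2 : k) • (ι (a' : H) * ι (a : H))
            + ι (a' : H) * ι (a' : H))
    (A : sp) (hAF : ∀ x ∈ F, A.1 x ∈ F) :
    LinearMap.trace k (H ⧸ F) (Submodule.mapQ F F A.1 (fun x hx => hAF x hx))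
        = LinearMap.trace k F' (p ∘ₗ A.1 ∘ₗ F'.subtype) ∧
    LinearMap.trace k F' (p ∘ₗ A.1 ∘ₗ F'.subtype)
        = - LinearMap.trace k F (A.1.restrict hAF) ∧
    τhat A = τ A + ((1 / 2 : k) * LinearMap.trace k F (A.1.restrict hAF)) • (1 : U) := by
  classical
  have hdecomp : ∀ x : H, x - (p x : H) ∈ F := by
    intro x
    have hx : x ∈ F ⊔ F' := by rw [hcompl.sup_eq_top]; exact Submodule.mem_top
    rcases Submodule.mem_sup.mp hx with ⟨a, ha, b, hb, rfl⟩
    have hpb : p b = ⟨b, hb⟩ := hp1 ⟨b, hb⟩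
    have hpab : p (a + b) = ⟨b, hb⟩ := by rw [map_add, hp0 a ha, hpb, zero_add]
    rw [hpab]
    simpa using ha
  have hnd' : ∀ y : H, (∀ x : H, B x y = 0) → y = 0 := by
    intro y hy
    refine hnd.1 y (fun n => ?_)
    rw [hskew, hy n, neg_zero]
  have hsplit : ∀ x y : H, B x y = B (x - (p x : H)) y + B ((p x : F') : H) y := by
    intro x y
    rw [← LinearMap.add_apply, ← map_add, sub_add_cancel]
  -- the pairing maps
  set Φ : F' →ₗ[k] Module.Dual k F := B.flip.compl₁₂ F'.subtype F.subtype with hΦdef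
  set Ψ : F →ₗ[k] Module.Dual k F' := B.compl₁₂ F.subtype F'.subtype with hΨdef
  have hΦapp : ∀ (b : F') (a : F), Φ b a = B (a : H) (b : H) := fun b a => rfl
  have hΨapp : ∀ (a : F) (b : F'), Ψ a b = B (a : H) (b : H) := fun a b => rfl
  have hΦinj : Function.Injective Φ := by
    rw [← LinearMap.ker_eq_bot, eq_bot_iff]
    intro b hb
    have hb' : Φ b = 0 := hb
    have hz : (b : H) = 0 := by
      refine hnd' (b : H) (fun x => ?_)
      have h1 : B (x - (p x : H)) (b:H) = 0 := by
        have h1' := DFunLike.congr_fun hb' ⟨x - (p x:H), hdecomp x⟩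
        rw [hΦapp] at h1'
        simpa using h1'
      have h2 : B ((p x : F') : H) (b:H) = 0 := hF'iso _ (p x).2 _ b.2
      rw [hsplit x (b:H), h1, h2, add_zero]
    exact Submodule.mem_bot k |>.mpr (by exact_mod_cast hz)
  have hΨinj : Function.Injective Ψ := by
    rw [← LinearMap.ker_eq_bot, eq_bot_iff]
    intro a ha
    have ha' : Ψ a = 0 := ha
    have hz : (a : H) = 0 := by
      refine hnd' (a : H) (fun x => ?_)
      have h2 : B ((p x : F') : H) (a:H) = 0 := by
        have h3 := DFunLike.congr_fun ha' (p x)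
        rw [hΨapp] at h3
        have h4 : B (a : H) ((p x : F') : H) = 0 := by simpa using h3
        rw [hskew, h4, neg_zero]
      have h1 : B (x - (p x : H)) (a:H) = 0 := hFiso _ (hdecomp x) _ a.2
      rw [hsplit x (a:H), h1, h2, add_zero]
    exact Submodule.mem_bot k |>.mpr (by exact_mod_cast hz)
  have hrank : finrank k F' = finrank k (Module.Dual k F) := by
    rw [Subspace.dual_finrank_eq]
    refine le_antisymm ?_ ?_
    · have := LinearMap.finrank_le_finrank_of_injective hΦinj
      rwa [Subspace.dual_finrank_eq] at this
    · have := LinearMap.finrank_le_finrank_of_injective hΨinj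
      rwa [Subspace.dual_finrank_eq] at this
  set Φe : F' ≃ₗ[k] Module.Dual k F := LinearMap.linearEquivOfInjective Φ hΦinj hrank with hΦedef
  have hΦe : ∀ b : F', (Φe b : Module.Dual k F) = Φ b := fun b =>
    LinearMap.linearEquivOfInjective_apply hΦinj hrank b
  -- bases
  set e : Basis (Fin (finrank k F)) k F := Module.finBasis k F with hedef
  set f : Basis (Fin (finrank k F)) k F' := e.dualBasis.map Φe.symm with hfdef
  have hBf : ∀ (a : F) (j), B (a : H) ((f j : F') : H) = e.repr a j := by
    intro a j
    have h1 : Φe (f j) = e.dualBasis j := by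
      rw [hfdef]; simp
    have h2 : B (a : H) ((f j : F') : H) = (Φe (f j)) a := by rw [hΦe, hΦapp]
    rw [h2, h1, show e.dualBasis j = e.coord j from congrFun e.coe_dualBasis j,
      Basis.coord_apply]
  have hfrepr : ∀ (b : F') (j), f.repr b j = B ((e j : F) : H) (b : H) := by
    intro b j
    have hh : f.repr b j = e.dualBasis.repr (Φe b) j := by rw [hfdef]; simp
    rw [hh, Basis.dualBasis_repr, hΦe b, hΦapp]
  -- basis pairing values
  have hBef : ∀ i j, B ((e i : F) : H) ((f j : F') : H) = if i = j then (1:k) else 0 := by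
    intro i j
    rw [hBf (e i) j, Basis.repr_self, Finsupp.single_apply]
  -- expansion of elements of F and F'
  have hFexp : ∀ a : F, (a : H) = ∑ i, e.repr a i • ((e i : F) : H) := by
    intro a
    conv_lhs => rw [← e.sum_repr a]
    push_cast
    rfl
  have hF'exp : ∀ b : F', (b : H) = ∑ i, B ((e i : F) : H) (b : H) • ((f i : F') : H) := by
    intro b
    conv_lhs => rw [← f.sum_repr b]
    push_cast
    refine Finset.sum_congr rfl (fun i _ => ?_)
    rw [hfrepr b i]
  have hA : ∀ x y : H, B (A.1 x) y + B x (A.1 y) = 0 := (hsp A.1).mp A.2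
  have hA' : ∀ x y : H, B x (A.1 y) = - B (A.1 x) y := by
    intro x y
    linear_combination hA x y
  -- identity decomposition of H
  have idH : ∀ x : H,
      x = ∑ i, B ((e i : F) : H) x • ((f i : F') : H)
        - ∑ i, B ((f i : F') : H) x • ((e i : F) : H) := by
    intro x
    set a : F := ⟨x - (p x : H), hdecomp x⟩ with hadef
    set b : F' := p x with hbdef
    have hxab : x = (a : H) + (b : H) := by rw [hadef]; simp [hbdef]
    have t1 : ∀ i, B ((e i : F) : H) x = B ((e i : F) : H) (b : H) := by
      intro i
      rw [hxab, map_add, hFiso _ (e i).2 _ a.2, zero_add]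
    have t2 : ∀ i, B ((f i : F') : H) x = B ((f i : F') : H) (a : H) := by
      intro i
      rw [hxab, map_add, hF'iso _ (f i).2 _ b.2, add_zero]
    have t3 : ∀ i, B ((f i : F') : H) (a : H) = - e.repr a i := by
      intro i
      rw [hskew, hBf a i]
    calc x = (a : H) + (b : H) := hxab
      _ = ∑ i, e.repr a i • ((e i : F) : H)
            + ∑ i, B ((e i : F) : H) (b : H) • ((f i : F') : H) := by
            rw [← hFexp, ← hF'exp]
      _ = _ := by
            rw [sub_eq_add_neg, ← Finset.sum_neg_distrib, add_comm]
            congr 1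
            · exact Finset.sum_congr rfl (fun i _ => by rw [t1 i])
            · exact Finset.sum_congr rfl (fun i _ => by rw [t2 i, t3 i, neg_smul, neg_neg])
  -- trace formulas
  have htrF : LinearMap.trace k F (A.1.restrict hAF)
      = ∑ i, B (A.1 ((e i : F) : H)) ((f i : F') : H) := by
    rw [LinearMap.trace_eq_matrix_trace k e, Matrix.trace]
    refine Finset.sum_congr rfl (fun i _ => ?_)
    rw [Matrix.diag_apply, LinearMap.toMatrix_apply]
    exact (hBf (A.1.restrict hAF (e i)) i).symm
  have hpF : ∀ (x : H) (i), B ((e i : F) : H) ((p x : F') : H) = B ((e i : F) : H) x := by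
    intro x i
    have h0 : B ((e i : F) : H) (x - (p x : H)) = 0 := hFiso _ (e i).2 _ (hdecomp x)
    have : B ((e i : F) : H) x = B ((e i : F) : H) (x - (p x : H)) + B ((e i : F) : H) (p x : H) := by
      rw [← map_add]
      congr 1
      abel
    rw [this, h0, zero_add]
  have htrF' : LinearMap.trace k F' (p ∘ₗ A.1 ∘ₗ F'.subtype)
      = ∑ i, B ((e i : F) : H) (A.1 ((f i : F') : H)) := by
    rw [LinearMap.trace_eq_matrix_trace k f, Matrix.trace]
    refine Finset.sum_congr rfl (fun i _ => ?_)
    rw [Matrix.diag_apply, LinearMap.toMatrix_apply]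
    have : (p ∘ₗ A.1 ∘ₗ F'.subtype) (f i) = p (A.1 ((f i : F') : H)) := rfl
    rw [this, hfrepr, hpF]
  have part2 : LinearMap.trace k F' (p ∘ₗ A.1 ∘ₗ F'.subtype)
      = - LinearMap.trace k F (A.1.restrict hAF) := by
    rw [htrF, htrF', ← Finset.sum_neg_distrib]
    exact Finset.sum_congr rfl (fun i _ => by rw [hA'])
  have part1 : LinearMap.trace k (H ⧸ F) (Submodule.mapQ F F A.1 (fun x hx => hAF x hx))
      = LinearMap.trace k F' (p ∘ₗ A.1 ∘ₗ F'.subtype) := by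
    set q := Submodule.quotientEquivOfIsCompl F F' hcompl with hqdef
    have hconj : q.conj (Submodule.mapQ F F A.1 (fun x hx => hAF x hx))
        = p ∘ₗ A.1 ∘ₗ F'.subtype := by
      ext b
      rw [LinearEquiv.conj_apply]
      have h1 : q.symm b = Submodule.Quotient.mk (b : H) :=
        Submodule.quotientEquivOfIsCompl_symm_apply F F' hcompl b
      have h2 : (Submodule.mapQ F F A.1 (fun x hx => hAF x hx)) (Submodule.Quotient.mk (b : H))
          = Submodule.Quotient.mk (A.1 (b : H)) := rfl
      have h3 : (Submodule.Quotient.mk (A.1 (b : H)) : H ⧸ F)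
          = Submodule.Quotient.mk ((p (A.1 (b : H)) : F') : H) := by
        rw [Submodule.Quotient.eq]
        exact hdecomp _
      have h4 : q (Submodule.Quotient.mk ((p (A.1 (b : H)) : F') : H)) = p (A.1 (b : H)) :=
        Submodule.quotientEquivOfIsCompl_apply_mk_coe hcompl _
      simp only [LinearMap.coe_comp, Function.comp_apply, LinearEquiv.coe_coe,
        Submodule.coe_subtype]
      rw [h1, h2, h3, h4]
    rw [← hconj, LinearMap.trace_conj']
  refine ⟨part1, part2, ?_⟩
  -- Part 3
  set μ : sp →ₗ[k] U := τ - τhat with hμdef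
  set g : H → sp := fun u => ⟨(LinearMap.toSpanSingleton k H u).comp ((2 : k) • (B u)), hGmem u⟩
    with hgdef
  have hμapp : ∀ X : sp, μ X = τ X - τhat X := fun X => rfl
  have expand : ∀ x y : U, (x + y) * (x + y) - (x * x + (2:k) • (y * x) + y * y)
      = x * y - y * x := by
    intro x y
    rw [two_smul]
    noncomm_ring
  have lemμ : ∀ (a : F) (a' : F'),
      μ (g ((a : H) + (a' : H))) = (B (a : H) (a' : H)) • (1 : U) := by
    intro a a'
    have h1 : τ (g ((a:H) + (a':H))) * h = ι ((a:H) + (a':H)) * ι ((a:H) + (a':H)) := hτ _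
    have h2 : τhat (g ((a:H) + (a':H))) * h
        = ι (a:H) * ι (a:H) + (2:k) • (ι (a':H) * ι (a:H)) + ι (a':H) * ι (a':H) := hτhat a a'
    have hkey : μ (g ((a:H) + (a':H))) * h = ((B (a:H) (a':H)) • (1:U)) * h := by
      rw [hμapp, sub_mul, h1, h2, map_add, expand (ι (a:H)) (ι (a':H)), hcomm,
        smul_mul_assoc, one_mul]
    have hL : h * (μ (g ((a:H) + (a':H)))) = h * ((B (a:H) (a':H)) • (1:U)) := by
      rw [hcentral, hcentral, hkey]
    exact hunit.mul_left_cancel hL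
  have hgapp : ∀ u x : H, ((g u : sp) : Module.End k H) x = ((2:k) * B u x) • u := by
    intro u x
    show ((LinearMap.toSpanSingleton k H u).comp ((2:k) • (B u))) x = _
    rw [LinearMap.comp_apply, LinearMap.smul_apply, LinearMap.toSpanSingleton_apply,
      smul_eq_mul]
  have hmain : ((4:k) • A : sp)
      = ∑ i, ((g (((e i : F) : H) + A.1 ((f i : F') : H)) - g ((e i : F) : H)
                - g (A.1 ((f i : F') : H)))
            - (g (((f i : F') : H) + A.1 ((e i : F) : H)) - g ((f i : F') : H)
                - g (A.1 ((e i : F) : H)))) := by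
    apply Subtype.ext
    rw [SetLike.val_smul, AddSubmonoidClass.coe_finset_sum]
    apply LinearMap.ext; intro x
    rw [LinearMap.smul_apply, LinearMap.sum_apply]
    simp only [AddSubgroupClass.coe_sub, LinearMap.sub_apply]
    simp only [hgapp]
    -- per-index S-identity
    have hS : ∀ u v : H, ((2:k) * B (u+v) x) • (u+v) - ((2:k) * B u x) • u
        - ((2:k) * B v x) • v = ((2:k) * B u x) • v + ((2:k) * B v x) • u := by
      intro u v
      have hB : B (u+v) x = B u x + B v x := by rw [map_add, LinearMap.add_apply]
      rw [hB]
      module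
    have hsummand : ∀ i,
        (((2:k) * B (((e i:F):H) + A.1 ((f i:F'):H)) x) • (((e i:F):H) + A.1 ((f i:F'):H))
          - ((2:k) * B ((e i:F):H) x) • ((e i:F):H)
          - ((2:k) * B (A.1 ((f i:F'):H)) x) • (A.1 ((f i:F'):H)))
        - (((2:k) * B (((f i:F'):H) + A.1 ((e i:F):H)) x) • (((f i:F'):H) + A.1 ((e i:F):H))
          - ((2:k) * B ((f i:F'):H) x) • ((f i:F'):H)
          - ((2:k) * B (A.1 ((e i:F):H)) x) • (A.1 ((e i:F):H)))
        = (((2:k) * B ((e i:F):H) x) • (A.1 ((f i:F'):H))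
            + ((2:k) * B (A.1 ((f i:F'):H)) x) • ((e i:F):H))
          - (((2:k) * B ((f i:F'):H) x) • (A.1 ((e i:F):H))
            + ((2:k) * B (A.1 ((e i:F):H)) x) • ((f i:F'):H)) := by
      intro i
      rw [hS, hS]
    rw [Finset.sum_congr rfl (fun i _ => hsummand i), Finset.sum_sub_distrib,
      Finset.sum_add_distrib, Finset.sum_add_distrib]
    have hpull : ∀ (c : Fin (finrank k F) → k) (v : Fin (finrank k F) → H),
        ∑ i, ((2:k) * c i) • v i = (2:k) • ∑ i, c i • v i := by
      intro c v
      rw [Finset.smul_sum]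
      exact Finset.sum_congr rfl (fun i _ => (smul_smul _ _ _).symm)
    rw [hpull (fun i => B ((e i:F):H) x) (fun i => A.1 ((f i:F'):H)),
      hpull (fun i => B (A.1 ((f i:F'):H)) x) (fun i => ((e i:F):H)),
      hpull (fun i => B ((f i:F'):H) x) (fun i => A.1 ((e i:F):H)),
      hpull (fun i => B (A.1 ((e i:F):H)) x) (fun i => ((f i:F'):H))]
    have hAx1 : ∑ i, B ((e i:F):H) x • A.1 ((f i:F'):H)
        - ∑ i, B ((f i:F'):H) x • A.1 ((e i:F):H) = A.1 x := by
      conv_rhs => rw [idH x]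
      rw [map_sub, map_sum, map_sum]
      simp only [map_smul]
    have hAx2 : ∑ i, B (A.1 ((f i:F'):H)) x • ((e i:F):H)
        - ∑ i, B (A.1 ((e i:F):H)) x • ((f i:F'):H) = A.1 x := by
      have hid := idH (A.1 x)
      simp only [hA'] at hid
      simp only [neg_smul] at hid
      rw [Finset.sum_neg_distrib, Finset.sum_neg_distrib, sub_neg_eq_add] at hid
      rw [hid]
      abel
    calc (4:k) • A.1 x
        = (2:k) • (A.1 x) + (2:k) • (A.1 x) := by module
      _ = (2:k) • (∑ i, B ((e i:F):H) x • A.1 ((f i:F'):H)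
            - ∑ i, B ((f i:F'):H) x • A.1 ((e i:F):H))
          + (2:k) • (∑ i, B (A.1 ((f i:F'):H)) x • ((e i:F):H)
            - ∑ i, B (A.1 ((e i:F):H)) x • ((f i:F'):H)) := by rw [hAx1, hAx2]
      _ = _ := by
          rw [smul_sub, smul_sub]
          abel
  -- apply μ to the main identity
  have hμmain := congrArg μ hmain
  rw [map_smul, map_sum] at hμmain
  have hterm : ∀ i,
      μ ((g (((e i : F) : H) + A.1 ((f i : F') : H)) - g ((e i : F) : H)
            - g (A.1 ((f i : F') : H)))
        - (g (((f i : F') : H) + A.1 ((e i : F) : H)) - g ((f i : F') : H)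
            - g (A.1 ((e i : F) : H))))
      = ((-2 : k) * B (A.1 ((e i:F):H)) ((f i:F'):H)) • (1:U) := by
    intro i
    set w : F' := p (A.1 ((f i:F'):H)) with hwdef
    set d : F := ⟨A.1 ((f i:F'):H) - (w:H), hdecomp _⟩ with hddef
    have hdcoe : (d : H) = A.1 ((f i:F'):H) - (w:H) := rfl
    have v1 : μ (g ((e i : F) : H)) = 0 := by
      have hv := lemμ (e i) 0
      simpa using hv
    have v2 : μ (g ((f i : F') : H)) = 0 := by
      have hv := lemμ 0 (f i)
      simpa using hv
    have v3 : μ (g (A.1 ((e i : F) : H))) = 0 := by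
      have hv := lemμ ⟨A.1 ((e i:F):H), hAF _ (e i).2⟩ 0
      simpa using hv
    have v4 : μ (g (A.1 ((f i : F') : H))) = (B (d:H) (w:H)) • (1:U) := by
      have hv := lemμ d w
      rw [show (d:H) + (w:H) = A.1 ((f i:F'):H) from by rw [hdcoe]; abel] at hv
      exact hv
    have v5 : μ (g (((e i : F) : H) + A.1 ((f i : F') : H)))
        = (B (((e i:F):H) + (d:H)) (w:H)) • (1:U) := by
      have hv := lemμ (e i + d) w
      rw [show ((e i + d : F) : H) + (w:H) = ((e i:F):H) + A.1 ((f i:F'):H) from by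
        push_cast [hdcoe]; abel] at hv
      rw [hv, Submodule.coe_add]
    have v6 : μ (g (((f i : F') : H) + A.1 ((e i : F) : H)))
        = (B (A.1 ((e i:F):H)) ((f i:F'):H)) • (1:U) := by
      have hv := lemμ ⟨A.1 ((e i:F):H), hAF _ (e i).2⟩ (f i)
      rw [show ((⟨A.1 ((e i:F):H), hAF _ (e i).2⟩ : F) : H) + ((f i:F'):H)
          = ((f i:F'):H) + A.1 ((e i:F):H) from by push_cast; abel] at hv
      rw [hv]
    rw [map_sub, map_sub, map_sub, map_sub, map_sub, v1, v2, v3, v4, v5, v6]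
    have hBe : B (((e i:F):H) + (d:H)) (w:H) = B ((e i:F):H) (w:H) + B (d:H) (w:H) := by
      rw [map_add, LinearMap.add_apply]
    rw [hBe]
    have hBw : B ((e i:F):H) (w:H) = B ((e i:F):H) (A.1 ((f i:F'):H)) := hpF _ i
    rw [hBw, hA' ((e i:F):H) ((f i:F'):H)]
    match_scalars
    ring
  rw [Finset.sum_congr rfl (fun i _ => hterm i)] at hμmain
  rw [← Finset.sum_smul, ← Finset.mul_sum, ← htrF] at hμmain
  have hμval : μ A = ((-(1/2) : k) * LinearMap.trace k F (A.1.restrict hAF)) • (1:U) := by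
    have h4 : μ A = ((1/4):k) • ((4:k) • μ A) := by rw [smul_smul]; norm_num
    rw [h4, hμmain, smul_smul]
    congr 1
    ring
  rw [hμapp] at hμval
  calc τhat A = τ A - (τ A - τhat A) := by abel
    _ = τ A - ((-(1/2) : k) * LinearMap.trace k F (A.1.restrict hAF)) • (1:U) := by
        rw [hμval]
    _ = τ A + ((1/2 : k) * LinearMap.trace k F (A.1.restrict hAF)) • (1:U) := by
        rw [sub_eq_add_neg, ← neg_smul]
        congr 1
        ring
    _ = _ := by norm_num
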